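/- Let {A_i}_{i=1}^m satisfy (2r, δ)-RIP with δ < 1/5, let M* = U*(U*)^T with U* ∈ ℝ^{d×r}, and let f(U) = (1/(2m))Σ_i (⟨A_i, UU^T⟩ − ⟨A_i, M*⟩)². Then every U satisfying ∇f(U) = 0 and ∇²f(U) ⪰ 0 satisfies UU^T = M*. -/

import Mathlib

open Matrix BigOperators Filter Topology

noncomputable section

attribute [local instance] Matrix.normedAddCommGroup Matrix.normedSpace

/-- Squared Frobenius norm of a real matrix. -/
def frobSq {m n : Type*} [Fintype m] [Fintype n] (A : Matrix m n ℝ) : ℝ :=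
  ∑ i, ∑ j, (A i j) ^ 2

namespace Stmt11Aux

lemma myConjT {α β : Type*} (M : Matrix α β ℝ) : Mᴴ = Mᵀ := by
  ext i j; simp [conjTranspose_apply]

lemma frobSq_eq_trace {p q : Type*} [Fintype p] [Fintype q] (M : Matrix p q ℝ) :
    frobSq M = trace (M * Mᵀ) := by
  simp [frobSq, trace, Matrix.mul_apply, Matrix.diag, sq]

lemma frobSq_nonneg {p q : Type*} [Fintype p] [Fintype q] (M : Matrix p q ℝ) :
    0 ≤ frobSq M :=
  Finset.sum_nonneg fun _ _ => Finset.sum_nonneg fun _ _ => sq_nonneg _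

lemma frobSq_eq_zero {p q : Type*} [Fintype p] [Fintype q] {M : Matrix p q ℝ}
    (h : frobSq M ≤ 0) : M = 0 := by
  ext i j
  have h1 : frobSq M = 0 := le_antisymm h (frobSq_nonneg M)
  have h2 : ∀ i ∈ Finset.univ, (0:ℝ) ≤ ∑ j, (M i j)^2 :=
    fun _ _ => Finset.sum_nonneg fun _ _ => sq_nonneg _
  have := (Finset.sum_eq_zero_iff_of_nonneg h2).mp h1 i (Finset.mem_univ i)
  have := (Finset.sum_eq_zero_iff_of_nonneg (fun _ _ => sq_nonneg _)).mp this j (Finset.mem_univ j)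
  simpa [sq] using pow_eq_zero_iff (n := 2) (by norm_num) |>.mp this

lemma trace_nonneg_of_posSemidef {n : Type*} [Fintype n] [DecidableEq n]
    {M : Matrix n n ℝ} (hM : M.PosSemidef) : 0 ≤ trace M := by
  have h : ∀ i, 0 ≤ M i i := by
    intro i
    exact hM.diag_nonneg
  exact Finset.sum_nonneg fun i _ => h i

open scoped MatrixOrder in
lemma trace_mul_nonneg_of_posSemidef {n : Type*} [Fintype n] [DecidableEq n]
    {P S : Matrix n n ℝ} (hP : P.PosSemidef) (hS : S.PosSemidef) :
    0 ≤ trace (P * S) := by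
  obtain ⟨B, hB⟩ := CStarAlgebra.nonneg_iff_eq_star_mul_self.mp hP.nonneg
  rw [Matrix.star_eq_conjTranspose, myConjT] at hB
  have h1 : P * S = Bᵀ * (B * S) := by rw [hB, Matrix.mul_assoc]
  rw [h1, Matrix.trace_mul_comm]
  have : (B * S) * Bᵀ = B * S * Bᴴ := by rw [myConjT]
  rw [this, Matrix.mul_assoc]
  have := hS.mul_mul_conjTranspose_same B
  rw [Matrix.mul_assoc] at this
  exact trace_nonneg_of_posSemidef this

open scoped MatrixOrder in
lemma polar_invertible {n : Type*} [Fintype n] [DecidableEq n]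
    (M : Matrix n n ℝ) (h : IsUnit M.det) :
    ∃ O : Matrix n n ℝ, O * Oᵀ = 1 ∧ PosSemidef (M * Oᵀ) := by
  have hH : (M * Mᵀ).PosSemidef := by
    have := Matrix.posSemidef_self_mul_conjTranspose M
    rwa [myConjT] at this
  set P := CFC.sqrt (M * Mᵀ) with hPdef
  have hPP : P * P = M * Mᵀ := CFC.sqrt_mul_sqrt_self _ hH.nonneg
  have hPsym : Pᵀ = P := by
    have := (CFC.sqrt_nonneg (M * Mᵀ)).posSemidef.isHermitian
    rwa [IsHermitian, myConjT] at this
  have hdetP : IsUnit P.det := by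
    have hdet : P.det * P.det = M.det * M.det := by
      have := congrArg Matrix.det hPP
      rwa [Matrix.det_mul, Matrix.det_mul, Matrix.det_transpose] at this
    rcases h with ⟨u, hu⟩
    rw [isUnit_iff_ne_zero]
    intro h0
    rw [h0, mul_zero] at hdet
    have : M.det ≠ 0 := by rw [← hu]; exact u.ne_zero
    exact this (by nlinarith [hdet.symm])
  refine ⟨P⁻¹ * M, ?_, ?_⟩
  · have hOt : (P⁻¹ * M)ᵀ = Mᵀ * P⁻¹ := by
      rw [Matrix.transpose_mul, Matrix.transpose_nonsing_inv, hPsym]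
    rw [hOt]
    calc P⁻¹ * M * (Mᵀ * P⁻¹) = P⁻¹ * (M * Mᵀ) * P⁻¹ := by
          rw [Matrix.mul_assoc, ← Matrix.mul_assoc M, ← Matrix.mul_assoc]
      _ = P⁻¹ * (P * P) * P⁻¹ := by rw [hPP]
      _ = (P⁻¹ * P) * (P * P⁻¹) := by
          simp only [Matrix.mul_assoc]
      _ = 1 := by
          rw [Matrix.nonsing_inv_mul _ hdetP, Matrix.mul_nonsing_inv _ hdetP, Matrix.one_mul]
  · have hOt : (P⁻¹ * M)ᵀ = Mᵀ * P⁻¹ := by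
      rw [Matrix.transpose_mul, Matrix.transpose_nonsing_inv, hPsym]
    have : M * (Mᵀ * P⁻¹) = P := by
      rw [← Matrix.mul_assoc, ← hPP, Matrix.mul_assoc, Matrix.mul_nonsing_inv _ hdetP,
        Matrix.mul_one]
    rw [hOt, this]
    exact (CFC.sqrt_nonneg (M * Mᵀ)).posSemidef

lemma eval_det_add_smul_one {n : Type*} [Fintype n] [DecidableEq n]
    (M : Matrix n n ℝ) (t : ℝ) :
    (Matrix.charpoly (-M)).eval t = (t • (1 : Matrix n n ℝ) + M).det := by
  rw [Matrix.charpoly, eval_det, Matrix.matPolyEquiv_charmatrix]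
  congr 1
  rw [Polynomial.eval_sub, Polynomial.eval_X, Polynomial.eval_C, sub_neg_eq_add]
  congr 1
  ext i j
  simp [Matrix.scalar, Matrix.smul_apply, Matrix.one_apply, Matrix.diagonal_apply]

lemma polar_general {n : Type*} [Fintype n] [DecidableEq n] (M : Matrix n n ℝ) :
    ∃ O : Matrix n n ℝ, O * Oᵀ = 1 ∧ PosSemidef (M * Oᵀ) := by
  classical
  set p : Polynomial ℝ := Matrix.charpoly (-M) with hp
  have hpne : p ≠ 0 := (Matrix.charpoly_monic _).ne_zero
  have hroots : {x : ℝ | p.IsRoot x}.Finite := p.finite_setOf_isRoot hpne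
  have hnonempty : ∀ k : ℕ, (Set.Ioo (0:ℝ) (1/(k+1)) \ {x : ℝ | p.IsRoot x}).Nonempty := by
    intro k
    apply Set.Infinite.nonempty
    apply Set.Infinite.diff _ hroots
    exact Set.Ioo_infinite (by positivity)
  choose ε hε using hnonempty
  have hε0 : ∀ k, 0 < ε k := fun k => ((hε k).1).1
  have hε1 : ∀ k, ε k < 1/(k+1) := fun k => ((hε k).1).2
  have hεdet : ∀ k, IsUnit (ε k • (1 : Matrix n n ℝ) + M).det := by
    intro k
    rw [isUnit_iff_ne_zero, ← eval_det_add_smul_one]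
    exact (hε k).2
  have hεt : Tendsto ε atTop (𝓝 0) := by
    apply squeeze_zero (fun k => (hε0 k).le) (fun k => (hε1 k).le)
    exact tendsto_one_div_add_atTop_nhds_zero_nat
  have hOk : ∀ k, ∃ O : Matrix n n ℝ, O * Oᵀ = 1 ∧
      PosSemidef ((ε k • (1 : Matrix n n ℝ) + M) * Oᵀ) :=
    fun k => polar_invertible _ (hεdet k)
  choose O hO1 hO2 using hOk
  have hScl : IsClosed {B : Matrix n n ℝ | B * Bᵀ = 1} := by
    have : Continuous fun B : Matrix n n ℝ => B * Bᵀ :=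
      continuous_id.matrix_mul continuous_id.matrix_transpose
    exact isClosed_eq this continuous_const
  have hSb : {B : Matrix n n ℝ | B * Bᵀ = 1} ⊆ Metric.closedBall 0 1 := by
    intro B hB
    rw [Metric.mem_closedBall, dist_zero_right]
    rw [Matrix.norm_le_iff (by norm_num)]
    intro i j
    have h1 : ∑ l, B i l * B i l = 1 := by
      have := congrFun (congrFun hB i) i
      simpa [Matrix.mul_apply, Matrix.one_apply] using this
    have h2 : B i j * B i j ≤ 1 := by
      rw [← h1]
      have : ∀ l ∈ Finset.univ, (0:ℝ) ≤ B i l * B i l := fun l _ => mul_self_nonneg _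
      exact Finset.single_le_sum this (Finset.mem_univ j)
    rw [Real.norm_eq_abs, abs_le]
    constructor <;> nlinarith
  have hcompact : IsCompact {B : Matrix n n ℝ | B * Bᵀ = 1} := by
    apply Metric.isCompact_of_isClosed_isBounded hScl
    exact (Metric.isBounded_closedBall).subset hSb
  have : FirstCountableTopology (Matrix n n ℝ) := inferInstanceAs (FirstCountableTopology (n → n → ℝ))
  obtain ⟨Olim, hOlim, φ, hφ, hconv⟩ := hcompact.tendsto_subseq (fun k => hO1 k)
  refine ⟨Olim, hOlim, ?_⟩
  have hεφ : Tendsto (fun k => ε (φ k)) atTop (𝓝 0) := hεt.comp hφ.tendsto_atTop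
  have hPconv : Tendsto (fun k => (ε (φ k) • (1 : Matrix n n ℝ) + M) * (O (φ k))ᵀ)
      atTop (𝓝 (M * Olimᵀ)) := by
    have h1 : Tendsto (fun k => ε (φ k) • (1 : Matrix n n ℝ) + M) atTop (𝓝 M) := by
      have := (hεφ.smul_const (1 : Matrix n n ℝ)).add_const M
      simpa using this
    have h2 : Tendsto (fun k => (O (φ k))ᵀ) atTop (𝓝 Olimᵀ) :=
      (Continuous.matrix_transpose continuous_id).continuousAt.tendsto.comp hconv
    have hmul : Continuous fun q : Matrix n n ℝ × Matrix n n ℝ => q.1 * q.2 :=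
      continuous_fst.matrix_mul continuous_snd
    exact hmul.continuousAt.tendsto.comp (h1.prodMk_nhds h2)
  constructor
  · rw [Matrix.IsHermitian, myConjT]
    have h2 : Tendsto (fun k => ((ε (φ k) • (1 : Matrix n n ℝ) + M) * (O (φ k))ᵀ)ᵀ)
        atTop (𝓝 ((M * Olimᵀ)ᵀ)) :=
      (Continuous.matrix_transpose continuous_id).continuousAt.tendsto.comp hPconv
    have h3 : (fun k => ((ε (φ k) • (1 : Matrix n n ℝ) + M) * (O (φ k))ᵀ)ᵀ) =
        fun k => (ε (φ k) • (1 : Matrix n n ℝ) + M) * (O (φ k))ᵀ := by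
      funext k
      have := (hO2 (φ k)).1
      rw [Matrix.IsHermitian, myConjT] at this
      exact this
    rw [h3] at h2
    exact tendsto_nhds_unique h2 hPconv
  · intro x
    have hcont : Continuous fun B : Matrix n n ℝ =>
        x.sum fun i xi => x.sum fun j xj => star xi * B i j * xj := by
      simp only [Finsupp.sum]
      fun_prop
    have h4 := hcont.continuousAt.tendsto.comp hPconv
    exact le_of_tendsto_of_tendsto tendsto_const_nhds h4
      (Filter.Eventually.of_forall fun k => (hO2 (φ k)).2 x)

lemma key6 {d r : ℕ} (U V : Matrix (Fin d) (Fin r) ℝ) (hpsd : PosSemidef (Uᵀ * V)) :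
    frobSq ((U - V) * (U - V)ᵀ) ≤ 2 * frobSq (U * Uᵀ - V * Vᵀ) := by
  set A1 := Uᵀ * U with hA1
  set B1 := Vᵀ * V with hB1
  set P := Uᵀ * V with hP
  have hPsym : Pᵀ = P := by
    have := hpsd.isHermitian
    rwa [Matrix.IsHermitian, myConjT] at this
  have hPt : Vᵀ * U = P := by
    have : (Uᵀ * V)ᵀ = Vᵀ * U := by
      rw [Matrix.transpose_mul, Matrix.transpose_transpose]
    rw [← this, hPsym]
  have hA1sym : A1ᵀ = A1 := by rw [hA1, Matrix.transpose_mul, Matrix.transpose_transpose]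
  have hB1sym : B1ᵀ = B1 := by rw [hB1, Matrix.transpose_mul, Matrix.transpose_transpose]
  set x1 := trace (A1 * A1) with hx1
  set x2 := trace (B1 * B1) with hx2
  set x3 := trace (P * P) with hx3
  set x4 := trace (A1 * B1) with hx4
  set x5 := trace (A1 * P) with hx5
  set x6 := trace (B1 * P) with hx6
  have hS : (U - V)ᵀ * (U - V) = A1 + B1 - P - P := by
    rw [Matrix.transpose_sub, Matrix.sub_mul, Matrix.mul_sub, Matrix.mul_sub, hPt]
    rw [hA1, hB1, hP]
    abel
  have hF1 : frobSq ((U - V) * (U - V)ᵀ) = x1 + x2 + 4*x3 + 2*x4 - 4*x5 - 4*x6 := by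
    rw [frobSq_eq_trace]
    have hsymD : ((U - V) * (U - V)ᵀ)ᵀ = (U - V) * (U - V)ᵀ := by
      rw [Matrix.transpose_mul, Matrix.transpose_transpose]
    rw [hsymD]
    have hrot : (U - V) * (U - V)ᵀ * ((U - V) * (U - V)ᵀ) =
        (U - V) * ((U - V)ᵀ * (U - V) * (U - V)ᵀ) := by
      simp [Matrix.mul_assoc]
    rw [hrot, Matrix.trace_mul_comm]
    have : (U - V)ᵀ * (U - V) * (U - V)ᵀ * (U - V) =
        ((U - V)ᵀ * (U - V)) * ((U - V)ᵀ * (U - V)) := by simp [Matrix.mul_assoc]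
    rw [this, hS]
    simp only [Matrix.sub_mul, Matrix.mul_sub, Matrix.add_mul, Matrix.mul_add,
      Matrix.trace_sub, Matrix.trace_add]
    rw [Matrix.trace_mul_comm B1 A1, Matrix.trace_mul_comm P A1, Matrix.trace_mul_comm P B1]
    ring
  have hc : trace (U * Uᵀ * (V * Vᵀ)) = x3 := by
    have h1 : U * Uᵀ * (V * Vᵀ) = U * (Uᵀ * V * Vᵀ) := by simp [Matrix.mul_assoc]
    rw [h1, Matrix.trace_mul_comm]
    have h2 : Uᵀ * V * Vᵀ * U = P * (Vᵀ * U) := by rw [hP]; simp [Matrix.mul_assoc]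
    rw [h2, hPt]
  have ha : trace (U * Uᵀ * (U * Uᵀ)) = x1 := by
    have h1 : U * Uᵀ * (U * Uᵀ) = U * (Uᵀ * U * Uᵀ) := by simp [Matrix.mul_assoc]
    rw [h1, Matrix.trace_mul_comm]
    have h2 : Uᵀ * U * Uᵀ * U = A1 * A1 := by rw [hA1]; simp [Matrix.mul_assoc]
    rw [h2]
  have hb : trace (V * Vᵀ * (V * Vᵀ)) = x2 := by
    have h1 : V * Vᵀ * (V * Vᵀ) = V * (Vᵀ * V * Vᵀ) := by simp [Matrix.mul_assoc]
    rw [h1, Matrix.trace_mul_comm]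
    have h2 : Vᵀ * V * Vᵀ * V = B1 * B1 := by rw [hB1]; simp [Matrix.mul_assoc]
    rw [h2]
  have hc' : trace (V * Vᵀ * (U * Uᵀ)) = x3 := by
    rw [Matrix.trace_mul_comm, hc]
  have hF2 : frobSq (U * Uᵀ - V * Vᵀ) = x1 + x2 - 2*x3 := by
    rw [frobSq_eq_trace]
    have hsymE : (U * Uᵀ - V * Vᵀ)ᵀ = U * Uᵀ - V * Vᵀ := by
      rw [Matrix.transpose_sub, Matrix.transpose_mul, Matrix.transpose_mul,
        Matrix.transpose_transpose, Matrix.transpose_transpose]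
    rw [hsymE]
    simp only [Matrix.sub_mul, Matrix.mul_sub, Matrix.trace_sub]
    rw [ha, hb, hc, hc']
    ring
  have hF3 : 0 ≤ x1 + x2 - 2*x4 := by
    have h0 : frobSq (A1 - B1) = x1 + x2 - 2*x4 := by
      rw [frobSq_eq_trace]
      rw [Matrix.transpose_sub, hA1sym, hB1sym]
      simp only [Matrix.sub_mul, Matrix.mul_sub, Matrix.trace_sub]
      rw [Matrix.trace_mul_comm B1 A1]
      ring
    rw [← h0]; exact frobSq_nonneg _
  have hF4 : 0 ≤ x5 + x6 - 2*x3 := by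
    have hSpsd : PosSemidef ((U - V)ᵀ * (U - V)) := by
      have := Matrix.posSemidef_conjTranspose_mul_self (U - V)
      rwa [myConjT] at this
    have h0 : trace (P * ((U - V)ᵀ * (U - V))) = x5 + x6 - 2*x3 := by
      rw [hS]
      simp only [Matrix.mul_sub, Matrix.mul_add, Matrix.trace_sub, Matrix.trace_add]
      rw [Matrix.trace_mul_comm P A1, Matrix.trace_mul_comm P B1]
      ring
    have h1 := trace_mul_nonneg_of_posSemidef hpsd hSpsd
    linarith [h0 ▸ h1]
  linarith [hF1, hF2, hF3, hF4]

section Calculus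

lemma coord_contDiff {d r : ℕ} (a : Fin d) (k : Fin r) {n : ℕ∞} :
    ContDiff ℝ n (fun W : Matrix (Fin d) (Fin r) ℝ => W a k) := by
  have h1 : ContDiff ℝ n (id : Matrix (Fin d) (Fin r) ℝ → Matrix (Fin d) (Fin r) ℝ) :=
    contDiff_id
  have h2 := (contDiff_pi.mp h1) a
  exact (contDiff_pi.mp h2) k

lemma entry_contDiff {d r : ℕ} (a b : Fin d) {n : ℕ∞} :
    ContDiff ℝ n (fun W : Matrix (Fin d) (Fin r) ℝ => (W * Wᵀ) a b) := by
  have : (fun W : Matrix (Fin d) (Fin r) ℝ => (W * Wᵀ) a b) =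
      fun W => ∑ k, W a k * W b k := by
    funext W; simp [Matrix.mul_apply]
  rw [this]
  exact ContDiff.sum fun k _ => (coord_contDiff a k).mul (coord_contDiff b k)

lemma f_contDiff {d r m : ℕ} (A : Fin m → Matrix (Fin d) (Fin d) ℝ) (c : ℝ)
    (dd : Fin m → ℝ) {n : ℕ∞} :
    ContDiff ℝ n (fun W : Matrix (Fin d) (Fin r) ℝ =>
      c * ∑ i, ((∑ a, ∑ b, A i a b * (W * Wᵀ) a b) - dd i) ^ 2) := by
  apply ContDiff.mul contDiff_const
  apply ContDiff.sum
  intro i _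
  apply ContDiff.pow
  apply ContDiff.sub _ contDiff_const
  exact ContDiff.sum fun a _ => ContDiff.sum fun b _ =>
    contDiff_const.mul (entry_contDiff a b)

variable {E : Type*} [NormedAddCommGroup E] [NormedSpace ℝ E]

lemma line_hasDerivAt (f : E → ℝ) (hf : ContDiff ℝ 2 f) (U Z : E) (t : ℝ) :
    HasDerivAt (fun s : ℝ => f (U + s • Z)) (fderiv ℝ f (U + t • Z) Z) t := by
  have hline : HasDerivAt (fun s : ℝ => U + s • Z) Z t := by
    simpa using ((hasDerivAt_id t).smul_const Z).const_add U
  exact ((hf.differentiable (by norm_num) (U + t • Z)).hasFDerivAt).comp_hasDerivAt t hline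

lemma second_hasDerivAt (f : E → ℝ) (hf : ContDiff ℝ 2 f) (U Z : E) :
    HasDerivAt (fun t : ℝ => fderiv ℝ f (U + t • Z) Z)
      (iteratedFDeriv ℝ 2 f U ![Z, Z]) 0 := by
  have h2 : ContDiff ℝ 1 (fderiv ℝ f) := hf.fderiv_right (le_refl _)
  have hline : HasDerivAt (fun s : ℝ => U + s • Z) Z 0 := by
    simpa using ((hasDerivAt_id (0:ℝ)).smul_const Z).const_add U
  have step1 : HasDerivAt (fun t : ℝ => fderiv ℝ f (U + t • Z))
      (fderiv ℝ (fderiv ℝ f) (U + (0:ℝ) • Z) Z) 0 :=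
    ((h2.differentiable one_ne_zero (U + (0:ℝ) • Z)).hasFDerivAt).comp_hasDerivAt 0 hline
  have step2 := step1.clm_apply (hasDerivAt_const 0 Z)
  have heq : iteratedFDeriv ℝ 2 f U ![Z, Z] = fderiv ℝ (fderiv ℝ f) U Z Z := by
    rw [iteratedFDeriv_two_apply]
    simp
  rw [heq]
  simpa using step2

lemma poly1_hasDerivAt (e q s t : ℝ) :
    HasDerivAt (fun t : ℝ => (e + q*t + s*t^2)^2) (2*(e + q*t + s*t^2)*(q + 2*s*t)) t := by
  have hbase : HasDerivAt (fun t : ℝ => e + q*t + s*t^2) (q + 2*s*t) t := by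
    have h1 : HasDerivAt (fun t : ℝ => q * t) q t := by
      simpa using (hasDerivAt_id t).const_mul q
    have h2 : HasDerivAt (fun t : ℝ => s * t^2) (s*(2*t)) t := by
      simpa using (hasDerivAt_pow 2 t).const_mul s
    have := ((hasDerivAt_const t e).fun_add h1).fun_add h2
    exact this.congr_deriv (by ring)
  have := hbase.fun_pow 2
  exact this.congr_deriv (by norm_num)
  
lemma poly2_hasDerivAt (e q s : ℝ) :
    HasDerivAt (fun t : ℝ => 2*(e + q*t + s*t^2)*(q + 2*s*t)) (2*q^2 + 4*e*s) 0 := by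
  have hbase : HasDerivAt (fun t : ℝ => e + q*t + s*t^2) (q + 2*s*0) 0 := by
    have h1 : HasDerivAt (fun t : ℝ => q * t) q 0 := by
      simpa using (hasDerivAt_id (0:ℝ)).const_mul q
    have h2 : HasDerivAt (fun t : ℝ => s * t^2) (s*(2*0)) 0 := by
      simpa using (hasDerivAt_pow 2 (0:ℝ)).const_mul s
    have := ((hasDerivAt_const (0:ℝ) e).fun_add h1).fun_add h2
    exact this.congr_deriv (by ring)
  have hlin : HasDerivAt (fun t : ℝ => q + 2*s*t) (2*s) 0 := by
    have h1 : HasDerivAt (fun t : ℝ => 2*s*t) (2*s) 0 := by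
      simpa using (hasDerivAt_id (0:ℝ)).const_mul (2*s)
    simpa using (hasDerivAt_const (0:ℝ) q).fun_add h1
  have := (hbase.const_mul 2).fun_mul hlin
  exact this.congr_deriv (by norm_num; ring)

end Calculus

lemma expand_inner {d r : ℕ} (B : Matrix (Fin d) (Fin d) ℝ)
    (U Z : Matrix (Fin d) (Fin r) ℝ) (t : ℝ) :
    (∑ a, ∑ b, B a b * ((U + t • Z) * (U + t • Z)ᵀ) a b)
      = (∑ a, ∑ b, B a b * (U * Uᵀ) a b)
        + (∑ a, ∑ b, B a b * (U * Zᵀ + Z * Uᵀ) a b) * t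
        + (∑ a, ∑ b, B a b * (Z * Zᵀ) a b) * t^2 := by
  have hentry : ∀ (a b : Fin d), ((U + t • Z) * (U + t • Z)ᵀ) a b
      = (U * Uᵀ) a b + ((U * Zᵀ + Z * Uᵀ) a b) * t + ((Z * Zᵀ) a b) * t^2 := by
    intro a b
    simp only [Matrix.mul_apply, Matrix.add_apply, Matrix.transpose_apply,
      Matrix.smul_apply, smul_eq_mul, Finset.sum_mul, ← Finset.sum_add_distrib]
    apply Finset.sum_congr rfl
    intro k _
    ring
  calc (∑ a, ∑ b, B a b * ((U + t • Z) * (U + t • Z)ᵀ) a b)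
      = ∑ a, ∑ b, (B a b * (U * Uᵀ) a b + (B a b * ((U * Zᵀ + Z * Uᵀ) a b)) * t
          + (B a b * ((Z * Zᵀ) a b)) * t^2) := by
        refine Finset.sum_congr rfl fun a _ => Finset.sum_congr rfl fun b _ => ?_
        rw [hentry a b]
        ring
    _ = _ := by
        simp only [Finset.sum_add_distrib, ← Finset.sum_mul]

end Stmt11Aux

open Stmt11Aux

set_option maxHeartbeats 2000000 in
/-- No spurious local minima for symmetric matrix sensing: if the sensing matrices
`{A_i}` satisfy `(2r, δ)`-RIP with `δ < 1/5` and
`f(U) = (1/(2m))Σ_i (⟨A_i, UUᵀ⟩ − ⟨A_i, M*⟩)²` with `M* = U*(U*)ᵀ`, then every `U`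
with `∇f(U) = 0` and `∇²f(U) ⪰ 0` satisfies `UUᵀ = M*`. -/
theorem stmt11 {d r m : ℕ} (A : Fin m → Matrix (Fin d) (Fin d) ℝ) (δ : ℝ)
    (hδ : δ < 1 / 5)
    (hRIP : ∀ M : Matrix (Fin d) (Fin d) ℝ, M.rank ≤ 2 * r →
      (1 - δ) * frobSq M ≤ (1 / (m : ℝ)) * ∑ i, (∑ a, ∑ b, A i a b * M a b) ^ 2 ∧
        (1 / (m : ℝ)) * ∑ i, (∑ a, ∑ b, A i a b * M a b) ^ 2 ≤ (1 + δ) * frobSq M)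
    (Ustar : Matrix (Fin d) (Fin r) ℝ)
    (f : Matrix (Fin d) (Fin r) ℝ → ℝ)
    (hf : f = fun U => (1 / (2 * (m : ℝ))) * ∑ i,
      ((∑ a, ∑ b, A i a b * (U * Uᵀ) a b) - ∑ a, ∑ b, A i a b * (Ustar * Ustarᵀ) a b) ^ 2)
    (U : Matrix (Fin d) (Fin r) ℝ)
    (hgrad : fderiv ℝ f U = 0)
    (hhess : ∀ Z : Matrix (Fin d) (Fin r) ℝ, 0 ≤ iteratedFDeriv ℝ 2 f U ![Z, Z]) :
    U * Uᵀ = Ustar * Ustarᵀ := by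
  classical
  -- polar decomposition / alignment
  obtain ⟨O, hO1, hOpsd⟩ := polar_general (Uᵀ * Ustar)
  have hO2 : Oᵀ * O = 1 := mul_eq_one_comm.mp hO1
  set V : Matrix (Fin d) (Fin r) ℝ := Ustar * Oᵀ with hV
  have hpsdUV : PosSemidef (Uᵀ * V) := by
    rw [hV, ← Matrix.mul_assoc]
    exact hOpsd
  have hVV : V * Vᵀ = Ustar * Ustarᵀ := by
    rw [hV, Matrix.transpose_mul, Matrix.transpose_transpose, Matrix.mul_assoc,
      ← Matrix.mul_assoc Oᵀ, hO2, Matrix.one_mul]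
  set Z : Matrix (Fin d) (Fin r) ℝ := U - V with hZ
  set Em : Matrix (Fin d) (Fin d) ℝ := U * Uᵀ - Ustar * Ustarᵀ with hEm
  set dtar : Fin m → ℝ := fun i => ∑ a, ∑ b, A i a b * (Ustar * Ustarᵀ) a b with hdtar
  set e : Fin m → ℝ := fun i => ∑ a, ∑ b, A i a b * Em a b with he
  set q : Fin m → ℝ := fun i => ∑ a, ∑ b, A i a b * (U * Zᵀ + Z * Uᵀ) a b with hq
  set s : Fin m → ℝ := fun i => ∑ a, ∑ b, A i a b * (Z * Zᵀ) a b with hs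
  set c : ℝ := 1 / (2 * (m : ℝ)) with hcc
  have hedef : ∀ i, e i = (∑ a, ∑ b, A i a b * (U * Uᵀ) a b) - dtar i := by
    intro i
    rw [he, hdtar]
    simp only [hEm, Matrix.sub_apply, mul_sub, Finset.sum_sub_distrib]
  -- smoothness
  have hcontf : ContDiff ℝ 2 f := by
    rw [hf]
    exact f_contDiff A (1 / (2 * (m : ℝ))) dtar
  -- expansion along the line  U + t Z
  have hexp : ∀ t : ℝ, f (U + t • Z) = c * ∑ i, (e i + q i * t + s i * t^2)^2 := by
    intro t
    rw [hf]
    simp only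
    rw [hcc]
    congr 1
    refine Finset.sum_congr rfl fun i _ => ?_
    rw [expand_inner (A i) U Z t]
    rw [hedef i, hdtar]
    simp only [hq, hs]
    ring_nf
  -- first derivative along the line
  have hg1 : ∀ t : ℝ, fderiv ℝ f (U + t • Z) Z
      = c * ∑ i, (2*(e i + q i * t + s i * t^2)*(q i + 2 * s i * t)) := by
    intro t
    have hfun : (fun sv : ℝ => f (U + sv • Z)) =
        fun t : ℝ => c * ∑ i, (e i + q i * t + s i * t^2)^2 := funext hexp
    have h1 := line_hasDerivAt f hcontf U Z t
    rw [hfun] at h1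
    have hpoly : HasDerivAt (fun t : ℝ => c * ∑ i, (e i + q i * t + s i * t^2)^2)
        (c * ∑ i, (2*(e i + q i * t + s i * t^2)*(q i + 2 * s i * t))) t := by
      exact (HasDerivAt.fun_sum fun i _ => poly1_hasDerivAt (e i) (q i) (s i) t).const_mul c
    exact h1.unique hpoly
  -- gradient condition
  have hgrad0 : c * ∑ i, 2 * e i * q i = 0 := by
    have h0 := hg1 0
    rw [show U + (0:ℝ) • Z = U by simp, hgrad] at h0
    simp only [ContinuousLinearMap.zero_apply] at h0
    have heq2 : c * ∑ i, 2 * e i * q i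
        = c * ∑ i, 2*(e i + q i * 0 + s i * 0^2)*(q i + 2 * s i * 0) := by
      congr 1
      refine Finset.sum_congr rfl fun i _ => ?_
      ring
    rw [heq2, ← h0]
  -- Hessian value
  have hhessval : iteratedFDeriv ℝ 2 f U ![Z, Z] = c * ∑ i, (2*(q i)^2 + 4*(e i)*(s i)) := by
    have h2 := second_hasDerivAt f hcontf U Z
    have hfun : (fun t : ℝ => fderiv ℝ f (U + t • Z) Z) =
        fun t : ℝ => c * ∑ i, (2*(e i + q i * t + s i * t^2)*(q i + 2 * s i * t)) :=
      funext hg1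
    erw [hfun] at h2
    have hpoly2 : HasDerivAt
        (fun t : ℝ => c * ∑ i, (2*(e i + q i * t + s i * t^2)*(q i + 2 * s i * t)))
        (c * ∑ i, (2*(q i)^2 + 4*(e i)*(s i))) 0 :=
      (HasDerivAt.fun_sum fun i _ => poly2_hasDerivAt (e i) (q i) (s i)).const_mul c
    exact h2.unique hpoly2
  have hhessZ : 0 ≤ c * ∑ i, (2*(q i)^2 + 4*(e i)*(s i)) := hhessval ▸ hhess Z
  -- q = e + s
  have hid : U * Zᵀ + Z * Uᵀ = Em + Z * Zᵀ := by
    rw [hEm, ← hVV, hZ]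
    simp only [Matrix.transpose_sub, Matrix.mul_sub, Matrix.sub_mul]
    abel
  have hqes : ∀ i, q i = e i + s i := by
    intro i
    rw [hq, he, hs, hid]
    simp only [Matrix.add_apply, mul_add, Finset.sum_add_distrib]
  -- scalar consequences
  have hsum1 : ∑ i, e i * q i = 0 := by
    rcases Nat.eq_zero_or_pos m with hm | hm
    · subst hm
      simp
    · have hcpos : 0 < c := by
        rw [hcc]
        positivity
      have : c * (2 * ∑ i, e i * q i) = 0 := by
        rw [← hgrad0, Finset.mul_sum]
        congr 1
        refine Finset.sum_congr rfl fun i _ => ?_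
        ring
      have h2 : (2:ℝ) * ∑ i, e i * q i = 0 := by
        rcases mul_eq_zero.mp this with h | h
        · exact absurd h hcpos.ne'
        · exact h
      linarith
  have hsum2 : 0 ≤ ∑ i, ((q i)^2 + 2*(e i)*(s i)) := by
    rcases Nat.eq_zero_or_pos m with hm | hm
    · subst hm
      simp
    · have hcpos : 0 < c := by
        rw [hcc]
        positivity
      have h0 : c * ∑ i, (2*(q i)^2 + 4*(e i)*(s i))
          = c * (2 * ∑ i, ((q i)^2 + 2*(e i)*(s i))) := by
        rw [Finset.mul_sum, Finset.mul_sum, Finset.mul_sum]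
        refine Finset.sum_congr rfl fun i _ => ?_
        ring
      rw [h0] at hhessZ
      nlinarith
  -- combine : Σ s² ≥ 3 Σ e²
  have hcomb : 3 * ∑ i, (e i)^2 ≤ ∑ i, (s i)^2 := by
    have h1 : ∑ i, e i * q i = ∑ i, ((e i)^2 + e i * s i) := by
      refine Finset.sum_congr rfl fun i _ => ?_
      rw [hqes i]
      ring
    have h2 : ∑ i, ((q i)^2 + 2*(e i)*(s i)) =
        ∑ i, ((e i)^2 + 4 * (e i * s i) + (s i)^2) := by
      refine Finset.sum_congr rfl fun i _ => ?_
      rw [hqes i]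
      ring
    rw [h1] at hsum1
    rw [h2] at hsum2
    simp only [Finset.sum_add_distrib, ← Finset.mul_sum] at hsum1 hsum2
    linarith
  -- ranks
  have hrankE : Em.rank ≤ 2 * r := by
    have hfact : Em = Matrix.fromCols U Ustar * Matrix.fromRows Uᵀ (-Ustarᵀ) := by
      rw [Matrix.fromCols_mul_fromRows, hEm, Matrix.mul_neg, sub_eq_add_neg]
    rw [hfact]
    calc (Matrix.fromCols U Ustar * Matrix.fromRows Uᵀ (-Ustarᵀ)).rank
        ≤ (Matrix.fromCols U Ustar).rank := Matrix.rank_mul_le_left _ _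
      _ ≤ Fintype.card (Fin r ⊕ Fin r) := Matrix.rank_le_card_width _
      _ = 2 * r := by simp [Fintype.card_sum]; ring
  have hrankZ : (Z * Zᵀ).rank ≤ 2 * r := by
    calc (Z * Zᵀ).rank ≤ Z.rank := Matrix.rank_mul_le_left _ _
      _ ≤ Fintype.card (Fin r) := Matrix.rank_le_card_width _
      _ = r := Fintype.card_fin r
      _ ≤ 2 * r := by omega
  -- RIP applications
  have hRIP1 := (hRIP Em hrankE).1
  have hRIP2 := (hRIP (Z * Zᵀ) hrankZ).2
  have heE : ∀ i, (∑ a, ∑ b, A i a b * Em a b) = e i := fun i => rfl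
  have hsZ : ∀ i, (∑ a, ∑ b, A i a b * (Z * Zᵀ) a b) = s i := fun i => rfl
  simp only [heE, hsZ] at hRIP1 hRIP2
  -- Lemma 6
  have hkey : frobSq (Z * Zᵀ) ≤ 2 * frobSq Em := by
    have := key6 U V hpsdUV
    rw [hVV] at this
    rw [hZ, hEm]
    exact this
  -- finish
  have hmnn : (0:ℝ) ≤ 1 / (m:ℝ) := by positivity
  have hQP : 3 * ((1/(m:ℝ)) * ∑ i, (e i)^2) ≤ (1/(m:ℝ)) * ∑ i, (s i)^2 := by
    have := mul_le_mul_of_nonneg_left hcomb hmnn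
    calc 3 * ((1/(m:ℝ)) * ∑ i, (e i)^2) = (1/(m:ℝ)) * (3 * ∑ i, (e i)^2) := by ring
      _ ≤ (1/(m:ℝ)) * ∑ i, (s i)^2 := this
  have hFnn := frobSq_nonneg Em
  have hGnn := frobSq_nonneg (Z * Zᵀ)
  have hfinal : frobSq Em ≤ 0 := by
    by_cases hsign : (0:ℝ) ≤ 1 + δ
    · have hstep := mul_le_mul_of_nonneg_left hkey hsign
      have hd1 : (0:ℝ) < 1 - 5*δ := by linarith
      have hchain : 3*((1-δ) * frobSq Em) ≤ (1+δ) * (2 * frobSq Em) := by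
        linarith [hRIP1, hQP, hRIP2, hstep]
      nlinarith [hchain, hFnn, hd1]
    · push_neg at hsign
      have hstep : (1 + δ) * frobSq (Z * Zᵀ) ≤ 0 :=
        mul_nonpos_of_nonpos_of_nonneg (by linarith) hGnn
      have hd2 : (0:ℝ) < 1 - δ := by linarith
      have hchain : 3*((1-δ) * frobSq Em) ≤ 0 := by
        linarith [hRIP1, hQP, hRIP2, hstep]
      nlinarith [hchain, hd2]
  have hE0 : Em = 0 := frobSq_eq_zero hfinal
  have hfin : U * Uᵀ - Ustar * Ustarᵀ = 0 := by rw [← hEm]; exact hE0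
  exact sub_eq_zero.mp hfin
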